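/- Let ℓ ∈ ℕ^r, n ∈ ℤ, k ∈ ℕ, and let T ⊆ {1, …, r} be a subset with |T| = k + 1. For I ⊆ T write ℓ_I := ℓ + Σ_{i∈I} e^i. Suppose that w_0(ℓ_I) ≤ n for every proper subset I ⊊ T and that w_0(ℓ_T) = n + 1. Then w_0(ℓ_I) = n − k + |I| for every subset I ⊆ T. (This is the weight pattern on the (k+1)-cube rooted at ℓ which generates a nonzero class on the E^1-page of the level-filtration spectral sequence.) -/

import Mathlib

/-- weight pattern on a `(k+1)`-cube rooted at `ℓ`: if every proper lower
face vertex has weight ≤ n and the top vertex has weight `n + 1`, then the vertex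
indexed by `I ⊆ T` has weight exactly `n - k + |I|`. -/
theorem weight_pattern_on_cube
    (r : ℕ) (hr : 1 ≤ r)
    (w0 : (Fin r → ℕ) → ℤ)
    (hstep : ∀ (ℓ : Fin r → ℕ) (i : Fin r), |w0 (ℓ + Pi.single i 1) - w0 ℓ| = 1)
    (hsub : ∀ ℓ ℓ' : Fin r → ℕ, w0 (ℓ ⊓ ℓ') + w0 (ℓ ⊔ ℓ') ≤ w0 ℓ + w0 ℓ')
    (ℓ : Fin r → ℕ) (n : ℤ) (k : ℕ)
    (T : Finset (Fin r)) (hT : T.card = k + 1)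
    (hlow : ∀ I ⊆ T, I ≠ T → w0 (ℓ + ∑ i ∈ I, Pi.single i 1) ≤ n)
    (htop : w0 (ℓ + ∑ i ∈ T, Pi.single i 1) = n + 1) :
    ∀ I ⊆ T, w0 (ℓ + ∑ i ∈ I, Pi.single i 1) = n - (k : ℤ) + (I.card : ℤ) := by
  have hstep' : ∀ (a : Fin r → ℕ) (i : Fin r), w0 (a + Pi.single i 1) - 1 ≤ w0 a := by
    intro a i
    have h := le_abs_self (w0 (a + Pi.single i 1) - w0 a)
    rw [hstep a i] at h
    linarith
  have hinf : ∀ (a : Fin r → ℕ) (i j : Fin r), i ≠ j →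
      (a + Pi.single i 1) ⊓ (a + Pi.single j 1) = a := by
    intro a i j hij
    funext x
    simp only [Pi.inf_apply, Pi.add_apply]
    rcases eq_or_ne x i with rfl | hxi
    · rw [Pi.single_eq_same, Pi.single_eq_of_ne hij]
      omega
    · rw [Pi.single_eq_of_ne hxi]
      rcases eq_or_ne x j with rfl | hxj
      · rw [Pi.single_eq_same]; omega
      · rw [Pi.single_eq_of_ne hxj]; omega
  have hsup : ∀ (a : Fin r → ℕ) (i j : Fin r), i ≠ j →
      (a + Pi.single i 1) ⊔ (a + Pi.single j 1) = a + Pi.single i 1 + Pi.single j 1 := by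
    intro a i j hij
    funext x
    simp only [Pi.sup_apply, Pi.add_apply]
    rcases eq_or_ne x i with rfl | hxi
    · rw [Pi.single_eq_same, Pi.single_eq_of_ne hij]
      omega
    · rw [Pi.single_eq_of_ne hxi]
      rcases eq_or_ne x j with rfl | hxj
      · rw [Pi.single_eq_same]; omega
      · rw [Pi.single_eq_of_ne hxj]; omega
  have hins : ∀ (J : Finset (Fin r)) (x : Fin r), x ∉ J →
      ℓ + ∑ i ∈ insert x J, Pi.single i 1 =
        (ℓ + ∑ i ∈ J, Pi.single i 1) + Pi.single x 1 := by
    intro J x hx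
    rw [Finset.sum_insert hx]
    abel
  have key : ∀ d : ℕ, ∀ I ⊆ T, I.card + d = k + 1 →
      w0 (ℓ + ∑ i ∈ I, Pi.single i 1) = n - (k : ℤ) + (I.card : ℤ) := by
    intro d
    induction d using Nat.strong_induction_on with
    | _ d ih =>
      intro I hIT hcard
      match d, hcard with
      | 0, hcard =>
        have hEq : I = T := Finset.eq_of_subset_of_card_le hIT (by omega)
        subst hEq
        rw [htop, hT]
        push_cast
        ring
      | e + 1, hcard =>
        -- pick i ∈ T \ I
        have hne : I ≠ T := by
          intro h; subst h; omega
        have hcards : (T \ I).card = e + 1 := by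
          rw [Finset.card_sdiff_of_subset hIT]; omega
        obtain ⟨i, hi⟩ : (T \ I).Nonempty := by
          rw [← Finset.card_pos, hcards]; omega
        have hiT : i ∈ T := (Finset.mem_sdiff.mp hi).1
        have hiI : i ∉ I := (Finset.mem_sdiff.mp hi).2
        have hvi : w0 ((ℓ + ∑ x ∈ I, Pi.single x 1) + Pi.single i 1)
            = n - (k : ℤ) + ((I.card : ℤ) + 1) := by
          have := ih e (by omega) (insert i I)
            (Finset.insert_subset hiT hIT)
            (by rw [Finset.card_insert_of_notMem hiI]; omega)
          rw [hins I i hiI] at this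
          rw [this, Finset.card_insert_of_notMem hiI]
          push_cast; ring
        have hlb := hstep' (ℓ + ∑ x ∈ I, Pi.single x 1) i
        rw [hvi] at hlb
        match e with
        | 0 =>
          have hub := hlow I hIT hne
          have : I.card = k := by omega
          rw [this]
          push_cast at hlb ⊢
          linarith
        | f + 1 =>
          -- pick j ∈ T \ I, j ≠ i
          obtain ⟨j, hj⟩ : ((T \ I).erase i).Nonempty := by
            rw [← Finset.card_pos, Finset.card_erase_of_mem hi, hcards]; omega
          have hji : j ≠ i := (Finset.mem_erase.mp hj).1
          have hj' := (Finset.mem_erase.mp hj).2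
          have hjT : j ∈ T := (Finset.mem_sdiff.mp hj').1
          have hjI : j ∉ I := (Finset.mem_sdiff.mp hj').2
          have hvj : w0 ((ℓ + ∑ x ∈ I, Pi.single x 1) + Pi.single j 1)
              = n - (k : ℤ) + ((I.card : ℤ) + 1) := by
            have := ih (f + 1) (by omega) (insert j I)
              (Finset.insert_subset hjT hIT)
              (by rw [Finset.card_insert_of_notMem hjI]; omega)
            rw [hins I j hjI] at this
            rw [this, Finset.card_insert_of_notMem hjI]
            push_cast; ring
          have hjiI : j ∉ insert i I := by
            simp [Finset.mem_insert, hji, hjI]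
          have hvij : w0 ((ℓ + ∑ x ∈ I, Pi.single x 1) + Pi.single i 1 + Pi.single j 1)
              = n - (k : ℤ) + ((I.card : ℤ) + 2) := by
            have := ih f (by omega) (insert j (insert i I))
              (Finset.insert_subset hjT (Finset.insert_subset hiT hIT))
              (by rw [Finset.card_insert_of_notMem hjiI,
                    Finset.card_insert_of_notMem hiI]; omega)
            rw [hins (insert i I) j hjiI, hins I i hiI] at this
            rw [this, Finset.card_insert_of_notMem hjiI,
              Finset.card_insert_of_notMem hiI]
            push_cast; ring
          have hij : i ≠ j := fun h => hji h.symm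
          have hs := hsub ((ℓ + ∑ x ∈ I, Pi.single x 1) + Pi.single i 1)
            ((ℓ + ∑ x ∈ I, Pi.single x 1) + Pi.single j 1)
          rw [hinf _ i j hij, hsup _ i j hij, hvi, hvj, hvij] at hs
          linarith
  intro I hIT
  have hle : I.card ≤ k + 1 := by
    rw [← hT]; exact Finset.card_le_card hIT
  exact key (k + 1 - I.card) I hIT (by omega)
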